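/- Consider the 2-periodic system over 𝔽₂² with A(0) = [[1,1],[1,0]] and A(1) = [[1,0],[1,1]]. Its monodromy matrix A(1)A(0) = [[1,1],[0,1]] has no square root over any extension of 𝔽₂, hence the system admits no Floquet transform over any field of characteristic 2. -/
import Mathlib


open Matrix

lemma no_sqrt_aux (K : Type*) [Field K] [CharP K 2]
    (B : Matrix (Fin 2) (Fin 2) K) : B ^ 2 ≠ !![(1 : K), 1; 0, 1] := by
  intro hB
  have h2 : (2 : K) = 0 := by
    have := CharP.cast_eq_zero K 2
    simpa using this
  have e := fun i j => congrFun (congrFun hB i) j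
  have h00 := e 0 0
  have h01 := e 0 1
  have h10 := e 1 0
  have h11 := e 1 1
  simp only [pow_two, Matrix.mul_apply, Fin.sum_univ_two, Matrix.cons_val_zero,
    Matrix.cons_val_one, Matrix.head_cons, Matrix.cons_val', Matrix.head_fin_const,
    Matrix.empty_val', Matrix.cons_val_fin_one, Matrix.of_apply] at h00 h01 h10 h11
  -- h01 : B 0 0 * B 0 1 + B 0 1 * B 1 1 = 1
  have hs : B 0 1 * (B 0 0 + B 1 1) = 1 := by linear_combination h01
  have hne : B 0 0 + B 1 1 ≠ 0 := by
    intro h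
    rw [h, mul_zero] at hs
    exact zero_ne_one hs
  have hc : B 1 0 = 0 := by
    have : (B 0 0 + B 1 1) * B 1 0 = 0 := by linear_combination h10
    rcases mul_eq_zero.mp this with h | h
    · exact absurd h hne
    · exact h
  have ha2 : B 0 0 * B 0 0 = 1 := by rw [hc] at h00; linear_combination h00
  have hd2 : B 1 1 * B 1 1 = 1 := by rw [hc] at h11; linear_combination h11
  have ha : B 0 0 + 1 = 0 := by
    have : (B 0 0 + 1) ^ 2 = 0 := by linear_combination ha2 + B 0 0 * h2 + h2
    exact pow_eq_zero_iff (n := 2) (by norm_num) |>.mp this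
  have hd : B 1 1 + 1 = 0 := by
    have : (B 1 1 + 1) ^ 2 = 0 := by linear_combination hd2 + B 1 1 * h2 + h2
    exact pow_eq_zero_iff (n := 2) (by norm_num) |>.mp this
  exact hne (by linear_combination ha + hd - h2)

theorem counterexample_no_floquet_char_two
    (K : Type*) [Field K] [CharP K 2] :
    (!![(1 : K), 0; 1, 1] * !![(1 : K), 1; 1, 0] = !![1, 1; 0, 1]) ∧
    (¬ ∃ B : Matrix (Fin 2) (Fin 2) K, B ^ 2 = !![(1 : K), 0; 1, 1] * !![(1 : K), 1; 1, 0]) ∧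
    (¬ ∃ (P : ℕ → Matrix (Fin 2) (Fin 2) K) (Atil : Matrix (Fin 2) (Fin 2) K),
        (∀ k, IsUnit (P k)) ∧ (∀ k, P (k + 2) = P k) ∧
        (∀ k, Atil = P (k + 1) *
          (if k % 2 = 0 then !![(1 : K), 1; 1, 0] else !![(1 : K), 0; 1, 1]) * (P k)⁻¹)) := by
  have h2 : (2 : K) = 0 := by
    have := CharP.cast_eq_zero K 2
    simpa using this
  have hprod : (!![(1 : K), 0; 1, 1] * !![(1 : K), 1; 1, 0] = !![1, 1; 0, 1]) := by
    ext i j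
    fin_cases i <;> fin_cases j <;>
      simp [Matrix.mul_apply, Fin.sum_univ_two] <;> first | linear_combination h2 | rfl
  refine ⟨hprod, ?_, ?_⟩
  · rintro ⟨B, hB⟩
    rw [hprod] at hB
    exact no_sqrt_aux K B hB
  · rintro ⟨P, Atil, hU, hper, hA⟩
    have u0 := (Matrix.isUnit_iff_isUnit_det _).mp (hU 0)
    have u1 := (Matrix.isUnit_iff_isUnit_det _).mp (hU 1)
    have c0 : P 0 * (P 0)⁻¹ = 1 := Matrix.mul_nonsing_inv _ u0
    have c0' : (P 0)⁻¹ * P 0 = 1 := Matrix.nonsing_inv_mul _ u0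
    have c1 : (P 1)⁻¹ * P 1 = 1 := Matrix.nonsing_inv_mul _ u1
    have c0'' : (P 0)⁻¹ * (P 0)⁻¹⁻¹ = 1 := by
      rw [Matrix.nonsing_inv_nonsing_inv _ u0]; exact c0'
    have h0 : Atil = P 1 * !![(1 : K), 1; 1, 0] * (P 0)⁻¹ := by
      have := hA 0
      simpa using this
    have h1 : Atil = P 0 * !![(1 : K), 0; 1, 1] * (P 1)⁻¹ := by
      have := hA 1
      have hp2 : P 2 = P 0 := hper 0
      simpa [hp2] using this
    have key : ((P 0)⁻¹ * Atil * P 0) ^ 2 = !![(1 : K), 1; 0, 1] := by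
      rw [pow_two]
      have eAA : Atil * Atil
          = P 0 * (!![(1 : K), 0; 1, 1] * !![(1 : K), 1; 1, 0]) * (P 0)⁻¹ := by
        nth_rewrite 2 [h0]
        nth_rewrite 1 [h1]
        calc P 0 * !![(1 : K), 0; 1, 1] * (P 1)⁻¹ * (P 1 * !![(1 : K), 1; 1, 0] * (P 0)⁻¹)
            = P 0 * !![(1 : K), 0; 1, 1] * ((P 1)⁻¹ * P 1) * (!![(1 : K), 1; 1, 0] * (P 0)⁻¹) := by
              simp only [Matrix.mul_assoc]
          _ = P 0 * (!![(1 : K), 0; 1, 1] * !![(1 : K), 1; 1, 0]) * (P 0)⁻¹ := by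
              rw [c1]; simp only [Matrix.mul_one, Matrix.mul_assoc]
      calc (P 0)⁻¹ * Atil * P 0 * ((P 0)⁻¹ * Atil * P 0)
          = (P 0)⁻¹ * (Atil * (P 0 * (P 0)⁻¹) * Atil) * P 0 := by
            simp only [Matrix.mul_assoc]
        _ = (P 0)⁻¹ * (Atil * Atil) * P 0 := by rw [c0]; simp only [Matrix.mul_one]
        _ = !![(1 : K), 1; 0, 1] := by
            rw [eAA, hprod]
            calc (P 0)⁻¹ * (P 0 * !![(1 : K), 1; 0, 1] * (P 0)⁻¹) * P 0
                = ((P 0)⁻¹ * P 0) * !![(1 : K), 1; 0, 1] * ((P 0)⁻¹ * P 0) := by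
                  simp only [Matrix.mul_assoc]
              _ = !![(1 : K), 1; 0, 1] := by rw [c0']; simp
    exact no_sqrt_aux K _ key
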